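/- arXiv:2204.03427 — 2 statements merged into one kernel-verified Lean document; each statement's English description precedes it below -/
import Mathlib

section
/- Let D⊂ℝ^d be a bounded connected open domain with C³ boundary, ν>0, and let A∈C²(ℝ,ℝ^d) with A(0)=0 satisfy condition (S): there exist c,C>0 with (Σ_{j=1}^d A_j'(u))·sgn(u) ≥ c|u| − C for all u∈ℝ. Let h be a bounded continuous function on ℝ₊×D̄. Then for any solution u∈C^{1,2} of ∂_t u + div_x A(u) − νΔu = h(t,x) with u|_{∂D}=0, and any T>0, one has ‖u(T,·)‖_{L^∞(D)} ≤ M, where M>0 depends only on T, c, C, ‖h‖_{L^∞}, and the domain D (in particular, M is independent of the initial data u(0,·)). -/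
open Set MeasureTheory Filter Topology

noncomputable section

/-- `d`-dimensional Euclidean space. -/
abbrev Euc (d : ℕ) : Type := EuclideanSpace ℝ (Fin d)

/-- The `j`-th vector of the standard basis. -/
def ebasis (d : ℕ) (j : Fin d) : Euc d := EuclideanSpace.single j 1

/-- Time derivative `∂ₜ u (t,x)`. -/
def dtt {d : ℕ} (u : ℝ → Euc d → ℝ) (t : ℝ) (x : Euc d) : ℝ := deriv (fun s => u s x) t

/-- First spatial differential. -/
def dx1 {d : ℕ} (f : Euc d → ℝ) (x : Euc d) : Euc d →L[ℝ] ℝ := fderiv ℝ f x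

/-- Second spatial differential. -/
def dx2 {d : ℕ} (f : Euc d → ℝ) (x : Euc d) : Euc d →L[ℝ] Euc d →L[ℝ] ℝ :=
  fderiv ℝ (fun y => fderiv ℝ f y) x

/-- Laplacian `Δf(x)`. -/
def lapl {d : ℕ} (f : Euc d → ℝ) (x : Euc d) : ℝ :=
  ∑ j : Fin d, dx2 f x (ebasis d j) (ebasis d j)

/-- `div_x A(f) (x) = Σⱼ ∂_{xⱼ} (Aⱼ(f x))`. -/
def divA {d : ℕ} (A : ℝ → Fin d → ℝ) (f : Euc d → ℝ) (x : Euc d) : ℝ :=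
  ∑ j : Fin d, fderiv ℝ (fun y => A (f y) j) x (ebasis d j)

/-- `div (a(t,·) w(t,·)) (x) = Σⱼ ∂_{xⱼ} (aⱼ(t,x) w(t,x))`. -/
def divAW {d : ℕ} (a : ℝ → Euc d → Euc d) (w : ℝ → Euc d → ℝ) (t : ℝ) (x : Euc d) : ℝ :=
  ∑ j : Fin d, fderiv ℝ (fun y => a t y j * w t y) x (ebasis d j)

/-- The boundary of `D` is of class `C³`: near each boundary point, `D` is the sublevel
set of a `C³` function with non-vanishing differential. -/
def HasC3Boundary {d : ℕ} (D : Set (Euc d)) : Prop :=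
  ∀ x ∈ frontier D, ∃ (U : Set (Euc d)) (ψ : Euc d → ℝ),
    IsOpen U ∧ x ∈ U ∧ ContDiff ℝ 3 ψ ∧ (∀ y ∈ U, fderiv ℝ ψ y ≠ 0) ∧
    D ∩ U = {y ∈ U | ψ y < 0}

/-- A bounded connected open domain with `C³` boundary. -/
def GoodDomain {d : ℕ} (D : Set (Euc d)) : Prop :=
  IsOpen D ∧ IsConnected D ∧ Bornology.IsBounded D ∧ HasC3Boundary D

/-- `u ∈ C^{1,2}(J × D̄)`: continuous on the closed cylinder, once continuously
differentiable in `t` and twice in `x`. -/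
def IsC12On {d : ℕ} (J : Set ℝ) (D : Set (Euc d)) (u : ℝ → Euc d → ℝ) : Prop :=
  ContinuousOn (fun p : ℝ × Euc d => u p.1 p.2) (J ×ˢ closure D) ∧
  (∀ x ∈ closure D, ∀ t ∈ J, DifferentiableAt ℝ (fun s => u s x) t) ∧
  (∀ t ∈ J, ∀ x ∈ closure D, DifferentiableAt ℝ (u t) x) ∧
  (∀ t ∈ J, ∀ x ∈ closure D, DifferentiableAt ℝ (fun y => fderiv ℝ (u t) y) x) ∧
  ContinuousOn (fun p : ℝ × Euc d => dtt u p.1 p.2) (J ×ˢ closure D) ∧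
  ContinuousOn (fun p : ℝ × Euc d => dx1 (u p.1) p.2) (J ×ˢ closure D) ∧
  ContinuousOn (fun p : ℝ × Euc d => dx2 (u p.1) p.2) (J ×ˢ closure D)

/-- `N` bounds both the sup-norm and the parabolic Hölder seminorm of exponent `γ`
of `f` on `J × D̄`. -/
def parHolderBound {d : ℕ} {Y : Type*} [NormedAddCommGroup Y] (γ : ℝ) (J : Set ℝ)
    (D : Set (Euc d)) (f : ℝ → Euc d → Y) (N : ℝ) : Prop :=
  (∀ t ∈ J, ∀ x ∈ closure D, ‖f t x‖ ≤ N) ∧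
  ∀ t₁ ∈ J, ∀ t₂ ∈ J, ∀ x₁ ∈ closure D, ∀ x₂ ∈ closure D,
    ‖f t₁ x₁ - f t₂ x₂‖ ≤ N * (|t₁ - t₂| ^ (γ / 2) + ‖x₁ - x₂‖ ^ γ)

/-- The parabolic Hölder norm `|||f|||_γ` on `J × D̄` (up to equivalence). -/
def parHolderNorm {d : ℕ} {Y : Type*} [NormedAddCommGroup Y] (γ : ℝ) (J : Set ℝ)
    (D : Set (Euc d)) (f : ℝ → Euc d → Y) : ℝ :=
  sInf {N : ℝ | 0 ≤ N ∧ parHolderBound γ J D f N}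

/-- `h ∈ C^{γ/2,γ}(J × D̄)`. -/
def MemParHolder {d : ℕ} (γ : ℝ) (J : Set ℝ) (D : Set (Euc d)) (h : ℝ → Euc d → ℝ) : Prop :=
  ContinuousOn (fun p : ℝ × Euc d => h p.1 p.2) (J ×ˢ closure D) ∧
  ∃ N, parHolderBound γ J D h N

/-- `N` bounds the `X^γ(J × D̄)` norm of `u`. -/
def XgammaBound {d : ℕ} (γ : ℝ) (J : Set ℝ) (D : Set (Euc d)) (u : ℝ → Euc d → ℝ)
    (N : ℝ) : Prop :=
  (∀ t ∈ J, ∀ x ∈ closure D, |u t x| ≤ N) ∧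
  parHolderBound γ J D (fun t x => dtt u t x) N ∧
  parHolderBound γ J D (fun t x => dx1 (u t) x) N ∧
  parHolderBound γ J D (fun t x => dx2 (u t) x) N

/-- The `X^γ(J × D̄)` norm (up to equivalence). -/
def XgammaNorm {d : ℕ} (γ : ℝ) (J : Set ℝ) (D : Set (Euc d)) (u : ℝ → Euc d → ℝ) : ℝ :=
  sInf {N : ℝ | 0 ≤ N ∧ XgammaBound γ J D u N}

/-- `u ∈ X^γ(J × D̄)`. -/
def MemXgamma {d : ℕ} (γ : ℝ) (J : Set ℝ) (D : Set (Euc d)) (u : ℝ → Euc d → ℝ) : Prop :=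
  IsC12On J D u ∧ ∃ N, XgammaBound γ J D u N

/-- `N` bounds the sup and the `γ`-Hölder seminorm of `f` on `S`. -/
def holderBoundOn {X Y : Type*} [NormedAddCommGroup X] [NormedAddCommGroup Y]
    (γ : ℝ) (S : Set X) (f : X → Y) (N : ℝ) : Prop :=
  (∀ x ∈ S, ‖f x‖ ≤ N) ∧ ∀ x ∈ S, ∀ y ∈ S, ‖f x - f y‖ ≤ N * ‖x - y‖ ^ γ

/-- `N` bounds the `C^{2+γ}(D̄)` norm of `g`. -/
def C2gammaBound {d : ℕ} (γ : ℝ) (D : Set (Euc d)) (g : Euc d → ℝ) (N : ℝ) : Prop :=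
  holderBoundOn γ (closure D) g N ∧
  holderBoundOn γ (closure D) (fun x => dx1 g x) N ∧
  holderBoundOn γ (closure D) (fun x => dx2 g x) N

/-- The `C^{2+γ}(D̄)` norm (up to equivalence). -/
def C2gammaNorm {d : ℕ} (γ : ℝ) (D : Set (Euc d)) (g : Euc d → ℝ) : ℝ :=
  sInf {N : ℝ | 0 ≤ N ∧ C2gammaBound γ D g N}

/-- `g ∈ C^{2+γ}(D̄)`. -/
def MemC2gamma {d : ℕ} (γ : ℝ) (D : Set (Euc d)) (g : Euc d → ℝ) : Prop :=
  (∀ x ∈ closure D, DifferentiableAt ℝ g x ∧ DifferentiableAt ℝ (fun y => fderiv ℝ g y) x) ∧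
  ∃ N, C2gammaBound γ D g N

/-- `u` satisfies `∂ₜu + div_x A(u) - ν Δu = h` for `t ∈ Jpde`, `x ∈ D`. -/
def SolvesPDE {d : ℕ} (ν : ℝ) (A : ℝ → Fin d → ℝ) (Jpde : Set ℝ) (D : Set (Euc d))
    (h u : ℝ → Euc d → ℝ) : Prop :=
  ∀ t ∈ Jpde, ∀ x ∈ D, dtt u t x + divA A (u t) x - ν * lapl (u t) x = h t x

/-- Homogeneous Dirichlet boundary condition on `J × ∂D`. -/
def DirichletBC {d : ℕ} (J : Set ℝ) (D : Set (Euc d)) (u : ℝ → Euc d → ℝ) : Prop :=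
  ∀ t ∈ J, ∀ x ∈ frontier D, u t x = 0

/-- The compatibility conditions on `∂D`. -/
def CompatCond {d : ℕ} (ν : ℝ) (A : ℝ → Fin d → ℝ) (D : Set (Euc d))
    (h : ℝ → Euc d → ℝ) (u₀ : Euc d → ℝ) : Prop :=
  ∀ x ∈ frontier D, u₀ x = 0 ∧ divA A u₀ x - ν * lapl u₀ x - h 0 x = 0

/-- The sign condition (S): `(Σⱼ Aⱼ'(u)) sgn u ≥ c|u| - C`. -/
def SignCondition {d : ℕ} (A : ℝ → Fin d → ℝ) (c C : ℝ) : Prop :=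
  ∀ u : ℝ, c * |u| - C ≤ (∑ j : Fin d, deriv (fun v => A v j) u) * Real.sign u

/-- The `L¹(D)` norm. -/
def L1norm {d : ℕ} (D : Set (Euc d)) (f : Euc d → ℝ) : ℝ := ∫ x in D, |f x|

/-- The `L^∞(D)` norm (of a bounded continuous function). -/
def supNorm {d : ℕ} (D : Set (Euc d)) (f : Euc d → ℝ) : ℝ :=
  sSup ((fun x => |f x|) '' closure D)

/-- The piecewise constant control from Theorem 2.2: `ξ(t) = ξₖ` for
`t ∈ [k - 1/2, k - 1/2 + τₖ)` (where `k - 1 ≤ t < k`, `k ≥ 1`) and `ξ(t) = 0` otherwise. -/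
def ctrl (ξs τs : ℕ → ℝ) (t : ℝ) : ℝ :=
  Set.indicator
    (Set.Ico (((⌊t⌋₊ + 1 : ℕ) : ℝ) - 1/2) ((((⌊t⌋₊ + 1 : ℕ) : ℝ) - 1/2) + τs (⌊t⌋₊ + 1)))
    (fun _ => ξs (⌊t⌋₊ + 1)) t

/-- `ξ` is piecewise constant on `[0, T]`. -/
def PiecewiseConstOn (ξ : ℝ → ℝ) (T : ℝ) : Prop :=
  ∃ n : ℕ, ∃ τ : ℕ → ℝ, τ 0 = 0 ∧ τ n = T ∧ (∀ k < n, τ k < τ (k + 1)) ∧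
    ∀ k < n, ∀ t ∈ Ico (τ k) (τ (k + 1)), ξ t = ξ (τ k)

/-- `u` is the solution of the controlled problem with control `ξ(t) φ(x)`: a continuous curve
in `C^{2+γ}(D̄)` satisfying the initial and boundary conditions and solving the PDE on every
interval of constancy of `ξ` (i.e. at every time at which `ξ` is locally constant). -/
def IsCtrlSolOn {d : ℕ} (γ ν : ℝ) (A : ℝ → Fin d → ℝ) (D : Set (Euc d))
    (h : ℝ → Euc d → ℝ) (φ : Euc d → ℝ) (ξ : ℝ → ℝ) (u₀ : Euc d → ℝ)
    (J Jo : Set ℝ) (u : ℝ → Euc d → ℝ) : Prop :=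
  ContinuousOn (fun p : ℝ × Euc d => u p.1 p.2) (J ×ˢ closure D) ∧
  (∀ t ∈ J, MemC2gamma γ D (u t)) ∧
  DirichletBC J D u ∧
  (∀ x ∈ closure D, u 0 x = u₀ x) ∧
  ∀ t ∈ Jo, (∀ᶠ s in nhds t, ξ s = ξ t) →
    (∀ x ∈ closure D, DifferentiableAt ℝ (fun s => u s x) t) ∧
    ∀ x ∈ D, dtt u t x + divA A (u t) x - ν * lapl (u t) x = h t x + ξ t * φ x

/-! ### Auxiliary lemmas for the proof of `stmt_3` -/

lemma aux_left_deriv_nonneg {ψ : ℝ → ℝ} {a b L : ℝ} (hab : a < b)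
    (h : HasDerivAt ψ L b) (h0 : ψ b = 0) (hneg : ∀ s ∈ Set.Ico a b, ψ s < 0) : 0 ≤ L := by
  have hs := hasDerivAt_iff_tendsto_slope.1 h
  have hclos : b ∈ closure (Set.Ico a b) := by
    rw [closure_Ico hab.ne]; exact ⟨hab.le, le_refl b⟩
  have hne : (𝓝[Set.Ico a b] b).NeBot := mem_closure_iff_nhdsWithin_neBot.mp hclos
  have hsub : 𝓝[Set.Ico a b] b ≤ 𝓝[≠] b :=
    nhdsWithin_mono b (fun s hs => ne_of_lt hs.2)
  have ht : Filter.Tendsto (slope ψ b) (𝓝[Set.Ico a b] b) (𝓝 L) := hs.mono_left hsub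
  refine ge_of_tendsto ht ?_
  filter_upwards [self_mem_nhdsWithin] with s hsmem
  have h1 : ψ s < 0 := hneg s hsmem
  have h2 : s - b < 0 := sub_neg.2 hsmem.2
  have he : slope ψ b s = (ψ s - ψ b) / (s - b) := slope_def_field ψ b s
  rw [he, h0, sub_zero]
  exact le_of_lt (div_pos_of_neg_of_neg h1 h2)

lemma aux_second_deriv_test {g G : ℝ → ℝ} {ε D2 : ℝ} (hε : 0 < ε)
    (hdiff : ∀ r ∈ Set.Ioo (-ε) ε, HasDerivAt g (G r) r)
    (hmax : ∀ r ∈ Set.Ioo (-ε) ε, g r ≤ g 0)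
    (hG' : HasDerivAt G D2 0) (hG0 : G 0 = 0) : D2 ≤ 0 := by
  by_contra hpos
  push_neg at hpos
  have hs := hasDerivAt_iff_tendsto_slope.1 hG'
  have hev : ∀ᶠ s in 𝓝[≠] (0:ℝ), 0 < slope G 0 s := hs.eventually (eventually_gt_nhds hpos)
  rw [eventually_nhdsWithin_iff, Metric.eventually_nhds_iff] at hev
  obtain ⟨ε₁, hε₁pos, hε₁⟩ := hev
  set ε₂ := min ε₁ ε with hε₂def
  have hε₂pos : 0 < ε₂ := lt_min hε₁pos hε
  have hε₂ε : ε₂ ≤ ε := min_le_right _ _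
  have hGpos : ∀ r ∈ Set.Ioo (0:ℝ) ε₂, 0 < G r := by
    intro r hr
    have hrne : r ≠ 0 := ne_of_gt hr.1
    have hdist : dist r 0 < ε₁ := by
      rw [Real.dist_eq, sub_zero, abs_of_pos hr.1]
      exact lt_of_lt_of_le hr.2 (min_le_left _ _)
    have h2 := hε₁ hdist hrne
    have hslope : slope G 0 r = G r / r := by
      rw [slope_def_field, hG0, sub_zero, sub_zero]
    rw [hslope] at h2
    have h3 := mul_pos h2 hr.1
    rwa [div_mul_cancel₀ _ hrne] at h3
  have hsubset : Set.Icc (0:ℝ) (ε₂/2) ⊆ Set.Ioo (-ε) ε := by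
    intro r hr
    exact ⟨by linarith [hr.1], by linarith [hr.2]⟩
  have hmono : StrictMonoOn g (Set.Icc (0:ℝ) (ε₂/2)) := by
    apply strictMonoOn_of_deriv_pos (convex_Icc _ _)
    · intro r hr
      exact (hdiff r (hsubset hr)).differentiableAt.continuousAt.continuousWithinAt
    · intro r hr
      rw [interior_Icc] at hr
      rw [(hdiff r (hsubset ⟨hr.1.le, hr.2.le⟩)).deriv]
      exact hGpos r ⟨hr.1, by linarith [hr.2]⟩
  have h01 : (0:ℝ) ∈ Set.Icc (0:ℝ) (ε₂/2) := ⟨le_refl _, by linarith⟩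
  have h02 : (ε₂/2) ∈ Set.Icc (0:ℝ) (ε₂/2) := ⟨by linarith, le_refl _⟩
  have hlt := hmono h01 h02 (by linarith)
  have hle := hmax (ε₂/2) (hsubset h02)
  linarith

/-- The sum-of-coordinates functional on `Euc d`. -/
def auxSc (d : ℕ) : Euc d →L[ℝ] ℝ := ∑ j, EuclideanSpace.proj j

lemma auxSc_ebasis {d : ℕ} (j : Fin d) : auxSc d (ebasis d j) = 1 := by
  simp [auxSc, ebasis, ContinuousLinearMap.sum_apply, PiLp.proj_apply,
    EuclideanSpace.single_apply]

lemma aux_numeric {c C Hb y p w : ℝ} (hc : 0 < c) (hC : 0 < C) (hHb : 0 ≤ Hb)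
    (hp : 0 < p) (hw : 1 ≤ w) (hy : y = Hb + C^2 + C + c + 1)
    (hineq : -(2*p^2) * w ≤ c*Hb - (2*p+y)^2 * w + C*(2*p+y)) : False := by
  have hypos : 0 < y := by nlinarith
  have h1 : (0:ℝ) ≤ (w - 1) * (2*p^2 + 4*p*y + y^2) := by
    apply mul_nonneg (by linarith)
    nlinarith
  have h2 : y * (y - C) ≥ (c+1)*(Hb + C^2 + c + 1) := by nlinarith
  nlinarith [sq_nonneg (p - C), mul_pos hp hypos, sq_nonneg p]

lemma aux_first_touch {d : ℕ} {D : Set (Euc d)} (hDc : IsCompact (closure D))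
    {δ T : ℝ} {G : ℝ → Euc d → ℝ}
    (hGcont : ContinuousOn (fun p : ℝ × Euc d => G p.1 p.2) (Set.Icc δ T ×ˢ closure D))
    (hδneg : ∀ x ∈ closure D, G δ x < 0)
    (hbad : ¬ (∀ t ∈ Set.Icc δ T, ∀ x ∈ closure D, G t x < 0)) :
    ∃ ts ∈ Set.Ioc δ T, ∃ xs ∈ closure D, G ts xs = 0 ∧
      (∀ x ∈ closure D, G ts x ≤ 0) ∧ (∀ s ∈ Set.Ico δ ts, ∀ x ∈ closure D, G s x < 0) := by
  push_neg at hbad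
  set Z : Set (ℝ × Euc d) := (Set.Icc δ T ×ˢ closure D) ∩
    (fun p : ℝ × Euc d => G p.1 p.2) ⁻¹' Set.Ici 0 with hZdef
  have hZne : Z.Nonempty := by
    obtain ⟨t, ht, x, hx, hGtx⟩ := hbad
    exact ⟨(t, x), ⟨⟨ht, hx⟩, hGtx⟩⟩
  have hZclosed : IsClosed Z :=
    hGcont.preimage_isClosed_of_isClosed (isClosed_Icc.prod isClosed_closure) isClosed_Ici
  have hZcomp : IsCompact Z :=
    (isCompact_Icc.prod hDc).of_isClosed_subset hZclosed Set.inter_subset_left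
  have hIm : IsCompact (Prod.fst '' Z) := hZcomp.image continuous_fst
  have hImne : (Prod.fst '' Z).Nonempty := hZne.image _
  have hts_mem : sInf (Prod.fst '' Z) ∈ Prod.fst '' Z := hIm.sInf_mem hImne
  set ts := sInf (Prod.fst '' Z) with hts_def
  obtain ⟨q, hqZ, hq1⟩ := hts_mem
  have hmin : ∀ r ∈ Z, ts ≤ r.1 := fun r hr =>
    csInf_le hIm.bddBelow ⟨r, hr, rfl⟩
  have htsIcc : ts ∈ Set.Icc δ T := hq1 ▸ hqZ.1.1
  have hbefore : ∀ s ∈ Set.Ico δ ts, ∀ x ∈ closure D, G s x < 0 := by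
    intro s hs x hx
    by_contra hge
    have hmem : (s, x) ∈ Z := ⟨⟨⟨hs.1, hs.2.le.trans htsIcc.2⟩, hx⟩, not_lt.mp hge⟩
    exact absurd (hmin _ hmem) (not_le.mpr hs.2)
  have htsδ : δ < ts := by
    rcases lt_or_eq_of_le htsIcc.1 with h | h
    · exact h
    · exfalso
      have h2 : G ts q.2 < 0 := h ▸ hδneg q.2 hqZ.1.2
      have h3 : (0:ℝ) ≤ G q.1 q.2 := hqZ.2
      rw [hq1] at h3
      linarith
  have hle : ∀ x ∈ closure D, G ts x ≤ 0 := by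
    intro x hx
    have hfc : ContinuousOn (fun s => G s x) (Set.Icc δ T) := by
      apply hGcont.comp (continuous_id.prodMk continuous_const).continuousOn
      intro s hs; exact ⟨hs, hx⟩
    have hclos : ts ∈ closure (Set.Ico δ ts) := by
      rw [closure_Ico htsδ.ne]; exact ⟨htsδ.le, le_refl _⟩
    have hne : (𝓝[Set.Ico δ ts] ts).NeBot := mem_closure_iff_nhdsWithin_neBot.mp hclos
    have hsub : Set.Ico δ ts ⊆ Set.Icc δ T := fun s hs => ⟨hs.1, hs.2.le.trans htsIcc.2⟩
    have htend : Filter.Tendsto (fun s => G s x) (𝓝[Set.Ico δ ts] ts) (𝓝 (G ts x)) :=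
      ((hfc ts htsIcc).mono hsub).tendsto
    refine le_of_tendsto htend ?_
    filter_upwards [self_mem_nhdsWithin] with s hsmem
    exact (hbefore s hsmem x hx).le
  have hG0 : G ts q.2 = 0 := by
    have h3 : (0:ℝ) ≤ G q.1 q.2 := hqZ.2
    rw [hq1] at h3
    exact le_antisymm (hle q.2 hqZ.1.2) h3
  exact ⟨ts, ⟨htsδ, htsIcc.2⟩, q.2, hqZ.1.2, hG0, hle, hbefore⟩

set_option maxHeartbeats 1000000 in
lemma aux_key {d : ℕ} {D : Set (Euc d)} (hDo : IsOpen D)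
    (hDcl : IsCompact (closure D))
    {R c C Hb K T ν : ℝ} (hR : 0 ≤ R) (hRb : ∀ x ∈ closure D, |auxSc d x| ≤ R)
    (hc : 0 < c) (hC : 0 < C) (hHb : 0 ≤ Hb) (hT : 0 < T) (hν : 0 < ν)
    (hK : c * K = Hb + C^2 + C + c + 1)
    {A : ℝ → Fin d → ℝ} (hA : ContDiff ℝ 2 A) (hsgn : SignCondition A c C)
    {h u : ℝ → Euc d → ℝ}
    (hhb : ∀ t ∈ Set.Ici (0:ℝ), ∀ x ∈ closure D, |h t x| ≤ Hb)
    (hu : IsC12On (Set.Ici 0) D u) (hpde : SolvesPDE ν A (Set.Ioi 0) D h u)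
    (hbc : DirichletBC (Set.Ici 0) D u)
    {σ : ℝ} (hσ : σ = 1 ∨ σ = -1) :
    ∀ x ∈ closure D, σ * u T x ≤ ((2/c) * T⁻¹ + K) * (1 + 2*R) := by
  intro x₀ hx₀
  have hσ2 : σ * σ = 1 := by rcases hσ with hh | hh <;> rw [hh] <;> norm_num
  have hσabs : |σ| = 1 := by rcases hσ with hh | hh <;> rw [hh] <;> norm_num
  have hKpos : 0 < K := by nlinarith
  -- the spatial profile and the time profile of the barrier
  set w : Euc d → ℝ := fun x => 1 + R + σ * auxSc d x with hwdef
  have hw1 : ∀ x ∈ closure D, 1 ≤ w x := by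
    intro x hx
    have h1 := hRb x hx
    have h2 : |σ * auxSc d x| = |auxSc d x| := by rw [abs_mul, hσabs, one_mul]
    have h3 := neg_abs_le (σ * auxSc d x)
    simp only [hwdef]
    rw [h2] at h3
    linarith
  have hw2 : ∀ x ∈ closure D, w x ≤ 1 + 2*R := by
    intro x hx
    have h1 := hRb x hx
    have h2 : |σ * auxSc d x| = |auxSc d x| := by rw [abs_mul, hσabs, one_mul]
    have h3 := le_abs_self (σ * auxSc d x)
    simp only [hwdef]
    rw [h2] at h3
    linarith
  set m : ℝ → ℝ := fun t => (2/c) * t⁻¹ + K with hmdef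
  have hmpos : ∀ t : ℝ, 0 < t → 0 < m t := by
    intro t ht
    have : 0 < (2/c) * t⁻¹ := by positivity
    simp only [hmdef]; linarith
  have hm' : ∀ t : ℝ, 0 < t → HasDerivAt m ((2/c) * (-(t^2)⁻¹)) t := by
    intro t ht
    exact ((hasDerivAt_inv ht.ne').const_mul (2/c)).add_const K
  -- a bound for u on the space-time cylinder
  have hsubIci : Set.Icc (0:ℝ) T ×ˢ closure D ⊆ Set.Ici (0:ℝ) ×ˢ closure D :=
    Set.prod_mono Set.Icc_subset_Ici_self subset_rfl
  obtain ⟨B₀, hB₀⟩ := (isCompact_Icc.prod hDcl).exists_bound_of_continuousOn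
    (hu.1.mono hsubIci)
  set B := max B₀ 0 with hBdef
  have hB : ∀ t ∈ Set.Icc (0:ℝ) T, ∀ x ∈ closure D, |u t x| ≤ B := by
    intro t ht x hx
    have := hB₀ (t, x) ⟨ht, hx⟩
    rw [Real.norm_eq_abs] at this
    exact this.trans (le_max_left _ _)
  have hBnn : 0 ≤ B := le_max_right _ _
  -- choice of δ
  set δ : ℝ := min (T/2) (2/(c*(B+1))) with hδdef
  have hδpos : 0 < δ := lt_min (by linarith) (by positivity)
  have hδT : δ < T := lt_of_le_of_lt (min_le_left _ _) (by linarith)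
  have hδB : B < (2/c) * δ⁻¹ := by
    have h1 : δ ≤ 2/(c*(B+1)) := min_le_right _ _
    have h2 : (2/(c*(B+1)))⁻¹ ≤ δ⁻¹ := by
      apply inv_anti₀ hδpos h1
    have h3 : (2/(c*(B+1)))⁻¹ = c*(B+1)/2 := by
      rw [inv_div]
    rw [h3] at h2
    have h4 : (2/c) * (c*(B+1)/2) = B + 1 := by field_simp
    nlinarith [mul_le_mul_of_nonneg_left h2 (le_of_lt (by positivity : (0:ℝ) < 2/c))]
  -- the comparison function
  set G : ℝ → Euc d → ℝ := fun t x => σ * u t x - m t * w x with hGdef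
  have hsub2 : Set.Icc δ T ×ˢ closure D ⊆ Set.Ici (0:ℝ) ×ˢ closure D :=
    Set.prod_mono (fun s hs => le_trans hδpos.le hs.1) subset_rfl
  have hwcont : Continuous w := by
    apply Continuous.add continuous_const
    exact continuous_const.mul (auxSc d).continuous
  have hGcont : ContinuousOn (fun p : ℝ × Euc d => G p.1 p.2) (Set.Icc δ T ×ˢ closure D) := by
    show ContinuousOn (fun p : ℝ × Euc d => σ * u p.1 p.2 - m p.1 * w p.2) _
    apply ContinuousOn.sub
    · exact continuousOn_const.mul (hu.1.mono hsub2)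
    · apply ContinuousOn.mul
      · show ContinuousOn (fun p : ℝ × Euc d => (2/c) * (p.1)⁻¹ + K) _
        apply ContinuousOn.add _ continuousOn_const
        apply ContinuousOn.mul continuousOn_const
        exact ContinuousOn.inv₀ continuous_fst.continuousOn
          (fun p hp => ne_of_gt (lt_of_lt_of_le hδpos hp.1.1))
      · exact (hwcont.comp continuous_snd).continuousOn
  -- at time δ the comparison function is negative
  have hδneg : ∀ x ∈ closure D, G δ x < 0 := by
    intro x hx
    have h1 : |u δ x| ≤ B := hB δ ⟨hδpos.le, hδT.le⟩ x hx
    have h2 : σ * u δ x ≤ B := by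
      calc σ * u δ x ≤ |σ * u δ x| := le_abs_self _
      _ = |u δ x| := by rw [abs_mul, hσabs, one_mul]
      _ ≤ B := h1
    have h3 : (2/c) * δ⁻¹ < m δ := by
      simp only [hmdef]; linarith
    have h4 : m δ ≤ m δ * w x :=
      le_mul_of_one_le_right (hmpos δ hδpos).le (hw1 x hx)
    show σ * u δ x - m δ * w x < 0
    have h5 : σ * u δ x < m δ * w x := by
      calc σ * u δ x ≤ B := h2
      _ < (2/c) * δ⁻¹ := hδB
      _ < m δ := h3
      _ ≤ m δ * w x := h4
    linarith
  -- main claim: the comparison function is negative on [δ, T] × D̄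
  have hmain : ∀ t ∈ Set.Icc δ T, ∀ x ∈ closure D, G t x < 0 := by
    by_contra hbad
    obtain ⟨ts, hts, xs, hxs, hG0, hGle, hbefore⟩ :=
      aux_first_touch hDcl hGcont hδneg hbad
    have hts0 : (0:ℝ) < ts := lt_trans hδpos hts.1
    have htsIci : ts ∈ Set.Ici (0:ℝ) := hts0.le
    -- the touching point is interior
    have hxsD : xs ∈ D := by
      by_contra hxsD
      have hfr : xs ∈ frontier D := by
        rw [frontier, hDo.interior_eq]; exact ⟨hxs, hxsD⟩
      have hu0 : u ts xs = 0 := hbc ts htsIci xs hfr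
      have hneg : G ts xs < 0 := by
        show σ * u ts xs - m ts * w xs < 0
        rw [hu0]
        have := mul_pos (hmpos ts hts0) (lt_of_lt_of_le one_pos (hw1 xs hxs))
        linarith
      rw [hG0] at hneg; exact lt_irrefl 0 hneg
    -- differentiability data
    have hFu : DifferentiableAt ℝ (u ts) xs := hu.2.2.1 ts htsIci xs hxs
    -- the spatial function φ and its local maximum at xs
    set φ : Euc d → ℝ := fun y => σ * u ts y - m ts * w y with hφdef
    have hφG : ∀ y, φ y = G ts y := fun y => rfl
    have hφmax : IsLocalMax φ xs := by
      filter_upwards [hDo.mem_nhds hxsD] with y hy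
      have h1 : φ y ≤ 0 := by rw [hφG]; exact hGle y (subset_closure hy)
      have h2 : φ xs = 0 := by rw [hφG]; exact hG0
      rw [h2]; exact h1
    have hφfz : fderiv ℝ φ xs = 0 := hφmax.fderiv_eq_zero
    have hwdiff : ∀ y : Euc d, HasFDerivAt w (σ • (auxSc d)) y := by
      intro y
      exact (((auxSc d).hasFDerivAt).const_mul σ).const_add (1 + R)
    have hφdiff : ∀ y : Euc d, DifferentiableAt ℝ (u ts) y →
        HasFDerivAt φ (σ • fderiv ℝ (u ts) y - m ts • (σ • auxSc d)) y := by
      intro y hy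
      exact (hy.hasFDerivAt.const_mul σ).sub ((hwdiff y).const_mul (m ts))
    have hgrad0 : σ • (fderiv ℝ (u ts) xs) - m ts • (σ • auxSc d) = 0 := by
      rw [← (hφdiff xs hFu).fderiv]; exact hφfz
    have hFe : ∀ j : Fin d, fderiv ℝ (u ts) xs (ebasis d j) = m ts := by
      intro j
      have h1 := congrArg (fun (L : Euc d →L[ℝ] ℝ) => L (ebasis d j)) hgrad0
      simp only [ContinuousLinearMap.sub_apply, ContinuousLinearMap.smul_apply,
        ContinuousLinearMap.zero_apply, smul_eq_mul, auxSc_ebasis] at h1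
      rcases hσ with hh | hh <;> rw [hh] at h1 <;> linarith
    -- second derivative test at the interior maximum
    have hlapl : σ * lapl (u ts) xs ≤ 0 := by
      rw [lapl, Finset.mul_sum]
      apply Finset.sum_nonpos
      intro j _
      set e : Euc d := ebasis d j with hedef
      obtain ⟨ε, hεpos, hball⟩ := Metric.isOpen_iff.1 hDo xs hxsD
      set ε' : ℝ := ε / (‖e‖ + 1) with hε'def
      have hε'pos : 0 < ε' := div_pos hεpos (by positivity)
      have hline : ∀ r : ℝ, |r| < ε' → xs + r • e ∈ D := by
        intro r hr
        apply hball
        rw [Metric.mem_ball, dist_eq_norm]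
        have he1 : xs + r • e - xs = r • e := by abel
        rw [he1, norm_smul, Real.norm_eq_abs]
        calc |r| * ‖e‖ ≤ |r| * (‖e‖ + 1) := by
              apply mul_le_mul_of_nonneg_left (by linarith) (abs_nonneg r)
        _ < ε' * (‖e‖ + 1) := by
              apply mul_lt_mul_of_pos_right hr (by positivity)
        _ = ε := div_mul_cancel₀ _ (by positivity)
      set ℓ : ℝ → Euc d := fun r => xs + r • e with hℓdef
      have hℓ0 : ℓ 0 = xs := by simp [hℓdef]
      have hℓD : ∀ r ∈ Set.Ioo (-ε') ε', ℓ r ∈ D := fun r hr =>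
        hline r (abs_lt.mpr ⟨hr.1, hr.2⟩)
      have hℓderiv : ∀ r : ℝ, HasDerivAt ℓ e r := by
        intro r
        have h1 : HasDerivAt (fun s : ℝ => s • e) ((1:ℝ) • e) r := (hasDerivAt_id r).smul_const e
        have h2 := h1.const_add xs
        rw [one_smul] at h2; exact h2
      set g : ℝ → ℝ := fun r => φ (ℓ r) with hgdef
      set Gf : ℝ → ℝ := fun r => (fderiv ℝ φ (ℓ r)) e with hGfdef
      have hgdiff : ∀ r ∈ Set.Ioo (-ε') ε', HasDerivAt g (Gf r) r := by
        intro r hr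
        have hyD := hℓD r hr
        have hud : DifferentiableAt ℝ (u ts) (ℓ r) :=
          hu.2.2.1 ts htsIci _ (subset_closure hyD)
        have hφd : HasFDerivAt φ (fderiv ℝ φ (ℓ r)) (ℓ r) :=
          ((hφdiff _ hud).differentiableAt).hasFDerivAt
        exact hφd.comp_hasDerivAt r (hℓderiv r)
      have hg00 : g 0 = 0 := by
        show φ (ℓ 0) = 0
        rw [hℓ0, hφG]; exact hG0
      have hgmax : ∀ r ∈ Set.Ioo (-ε') ε', g r ≤ g 0 := by
        intro r hr
        have h1 : φ (ℓ r) ≤ 0 := by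
          rw [hφG]; exact hGle _ (subset_closure (hℓD r hr))
        rw [hg00]; exact h1
      -- derivative of Gf at 0
      have hfdu : HasFDerivAt (fun y => fderiv ℝ (u ts) y)
          (fderiv ℝ (fun y => fderiv ℝ (u ts) y) xs) xs :=
        (hu.2.2.2.1 ts htsIci xs hxs).hasFDerivAt
      have hfdφ : HasFDerivAt (fun y => fderiv ℝ φ y)
          (σ • fderiv ℝ (fun y => fderiv ℝ (u ts) y) xs) xs := by
        have h1 : HasFDerivAt (fun y => σ • fderiv ℝ (u ts) y - m ts • (σ • auxSc d))
            (σ • fderiv ℝ (fun y => fderiv ℝ (u ts) y) xs) xs :=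
          (hfdu.const_smul σ).sub_const _
        have hev : (fun y => fderiv ℝ φ y) =ᶠ[𝓝 xs]
            (fun y => σ • fderiv ℝ (u ts) y - m ts • (σ • auxSc d)) := by
          filter_upwards [hDo.mem_nhds hxsD] with y hy
          exact (hφdiff y (hu.2.2.1 ts htsIci y (subset_closure hy))).fderiv
        exact hev.hasFDerivAt_iff.mpr h1
      have hGfd : HasDerivAt Gf ((σ • fderiv ℝ (fun y => fderiv ℝ (u ts) y) xs) e e) 0 := by
        have h2 : HasDerivAt (fun r => fderiv ℝ φ (ℓ r))
            ((σ • fderiv ℝ (fun y => fderiv ℝ (u ts) y) xs) e) 0 := by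
          have h3 : HasFDerivAt (fun y => fderiv ℝ φ y)
              (σ • fderiv ℝ (fun y => fderiv ℝ (u ts) y) xs) (ℓ 0) := by
            rw [hℓ0]; exact hfdφ
          exact h3.comp_hasDerivAt 0 (hℓderiv 0)
        have h4 := ((ContinuousLinearMap.apply ℝ ℝ e).hasFDerivAt).comp_hasDerivAt 0 h2
        exact h4
      have hGf0 : Gf 0 = 0 := by
        show (fderiv ℝ φ (ℓ 0)) e = 0
        rw [hℓ0, hφfz]
        rfl
      have hD2 := aux_second_deriv_test hε'pos hgdiff hgmax hGfd hGf0
      have heq : (σ • fderiv ℝ (fun y => fderiv ℝ (u ts) y) xs) e e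
          = σ * (dx2 (u ts) xs e e) := by
        rw [dx2]
        simp [ContinuousLinearMap.smul_apply]
      rw [heq] at hD2
      exact hD2
    -- time derivative at the touching time
    have hψd : HasDerivAt (fun s => σ * u s xs - m s * w xs)
        (σ * dtt u ts xs - (2/c) * (-(ts^2)⁻¹) * w xs) ts := by
      have h1 : HasDerivAt (fun s => u s xs) (dtt u ts xs) ts :=
        (hu.2.1 xs hxs ts htsIci).hasDerivAt
      exact (h1.const_mul σ).sub ((hm' ts hts0).mul_const (w xs))
    have hψ0 : σ * u ts xs - m ts * w xs = 0 := hG0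
    have hψneg : ∀ s ∈ Set.Ico δ ts, σ * u s xs - m s * w xs < 0 := fun s hs =>
      hbefore s hs xs hxs
    have htime : 0 ≤ σ * dtt u ts xs - (2/c) * (-(ts^2)⁻¹) * w xs :=
      aux_left_deriv_nonneg hts.1 hψd hψ0 hψneg
    -- value of div A (u ts) at xs
    have hdivA : divA A (u ts) xs = m ts * ∑ j, deriv (fun v => A v j) (u ts xs) := by
      rw [divA, Finset.mul_sum]
      apply Finset.sum_congr rfl
      intro j _
      have hAd : DifferentiableAt ℝ (fun v => A v j) (u ts xs) :=
        ((contDiff_pi.mp hA j).differentiable (by norm_num)).differentiableAt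
      have hAj : HasDerivAt (fun v => A v j) (deriv (fun v => A v j) (u ts xs)) (u ts xs) :=
        hAd.hasDerivAt
      have hcomp : HasFDerivAt (fun y => A (u ts y) j)
          ((deriv (fun v => A v j) (u ts xs)) • fderiv ℝ (u ts) xs) xs :=
        hAj.comp_hasFDerivAt xs hFu.hasFDerivAt
      rw [hcomp.fderiv]
      simp only [ContinuousLinearMap.smul_apply, smul_eq_mul, hFe j]
      ring
    -- the sign condition at the touching value
    have hus : σ * u ts xs = m ts * w xs := by
      have := hψ0; linarith
    have hwxpos : 0 < w xs := lt_of_lt_of_le one_pos (hw1 xs hxs)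
    have hmw : 0 < m ts * w xs := mul_pos (hmpos ts hts0) hwxpos
    have husval : u ts xs = σ * (m ts * w xs) := by
      rcases hσ with hh | hh <;> rw [hh] at hus ⊢ <;> linarith
    have hsign : Real.sign (u ts xs) = σ := by
      rcases hσ with hh | hh <;> rw [hh] <;> rw [hh] at husval
      · rw [husval]; rw [one_mul]; exact Real.sign_of_pos hmw
      · rw [husval]
        have : -1 * (m ts * w xs) < 0 := by linarith
        rw [Real.sign_of_neg this]
    have habs : |u ts xs| = m ts * w xs := by
      rcases hσ with hh | hh <;> rw [hh] at husval
      · rw [husval, one_mul]; exact abs_of_pos hmw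
      · rw [husval]
        have h9 : -1 * (m ts * w xs) < 0 := by linarith
        rw [abs_of_neg h9]; ring
    have hS := hsgn (u ts xs)
    rw [habs, hsign] at hS
    -- hS : c * (m ts * w xs) - C ≤ (∑ j, deriv (fun v => A v j) (u ts xs)) * σ
    -- the PDE at the touching point
    have hPDE := hpde ts hts0 xs hxsD
    -- bound on h
    have hh1 : σ * h ts xs ≤ Hb := by
      calc σ * h ts xs ≤ |σ * h ts xs| := le_abs_self _
      _ = |h ts xs| := by rw [abs_mul, hσabs, one_mul]
      _ ≤ Hb := hhb ts htsIci xs hxs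
    -- assemble the differential inequality
    have hdiv2 : m ts * (c * (m ts * w xs) - C) ≤ σ * divA A (u ts) xs := by
      rw [hdivA]
      have h1 : σ * (m ts * ∑ j, deriv (fun v => A v j) (u ts xs))
          = m ts * ((∑ j, deriv (fun v => A v j) (u ts xs)) * σ) := by ring
      rw [h1]
      exact mul_le_mul_of_nonneg_left hS (hmpos ts hts0).le
    have hvl : ν * (σ * lapl (u ts) xs) ≤ 0 :=
      mul_nonpos_of_nonneg_of_nonpos hν.le hlapl
    clear_value m w G φ
    have hfin : (2/c) * (-(ts^2)⁻¹) * w xs ≤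
        Hb - m ts * (c * (m ts * w xs) - C) := by
      have hdtt : σ * dtt u ts xs =
          σ * h ts xs - σ * divA A (u ts) xs + ν * (σ * lapl (u ts) xs) := by
        have h9 : dtt u ts xs = h ts xs - divA A (u ts) xs + ν * lapl (u ts) xs := by
          linarith [hPDE]
        rw [h9]; ring
      linarith [htime, hdtt, hh1, hdiv2, hvl]
    -- numerical contradiction
    set p : ℝ := ts⁻¹ with hpdef
    have hppos : 0 < p := inv_pos.mpr hts0
    set y : ℝ := c * K with hydef
    have hy : y = Hb + C^2 + C + c + 1 := hK
    have hcm : c * m ts = 2*p + y := by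
      simp only [hmdef, hydef, hpdef]
      field_simp
    have hts2 : (ts^2)⁻¹ = p^2 := by
      rw [hpdef, ← inv_pow]
    have hineq : -(2*p^2) * w xs ≤ c*Hb - (2*p+y)^2 * w xs + C*(2*p+y) := by
      have h5 := mul_le_mul_of_nonneg_left hfin hc.le
      have e1 : c * ((2/c) * (-(ts^2)⁻¹) * w xs) = -(2*p^2) * w xs := by
        rw [hts2]; field_simp
      have e2 : c * (Hb - m ts * (c * (m ts * w xs) - C))
          = c*Hb - (2*p+y)^2 * w xs + C*(2*p+y) := by
        rw [← hcm]; ring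
      rw [e1, e2] at h5
      exact h5
    exact aux_numeric hc hC hHb hppos (hw1 xs hxs) hy hineq
  -- conclusion
  have hGT : G T x₀ < 0 := hmain T ⟨hδT.le, le_refl T⟩ x₀ hx₀
  have h1 : m T * w x₀ ≤ m T * (1 + 2*R) :=
    mul_le_mul_of_nonneg_left (hw2 x₀ hx₀) (hmpos T hT).le
  have h2 : σ * u T x₀ - m T * w x₀ < 0 := hGT
  calc σ * u T x₀ ≤ m T * w x₀ := by linarith
  _ ≤ m T * (1 + 2*R) := h1
  _ = ((2/c) * T⁻¹ + K) * (1 + 2*R) := rfl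


/-- Proposition 1.4: a priori `L^∞` bound at time `T` for solutions of the
damped conservation law, with a constant depending only on `T`, `c`, `C`, `‖h‖_{L^∞}` and `D`
(in particular independent of `ν`, of `A` satisfying the sign condition, and of the
initial data). -/
theorem stmt_3 {d : ℕ} (D : Set (Euc d)) (hD : GoodDomain D)
    (c C T Hb : ℝ) (hc : 0 < c) (hC : 0 < C) (hT : 0 < T) (hHb : 0 ≤ Hb) :
    ∃ M : ℝ, 0 < M ∧
      ∀ ν : ℝ, 0 < ν → ∀ A : ℝ → Fin d → ℝ, ContDiff ℝ 2 A → A 0 = 0 →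
        SignCondition A c C →
        ∀ h u : ℝ → Euc d → ℝ,
          ContinuousOn (fun p : ℝ × Euc d => h p.1 p.2) (Ici 0 ×ˢ closure D) →
          (∀ t ∈ Ici (0:ℝ), ∀ x ∈ closure D, |h t x| ≤ Hb) →
          IsC12On (Ici 0) D u →
          SolvesPDE ν A (Ioi 0) D h u →
          DirichletBC (Ici 0) D u →
          ∀ x ∈ closure D, |u T x| ≤ M := by
  obtain ⟨hDo, hDconn, hDb, hDc3⟩ := hD
  have hDcl : IsCompact (closure D) := hDb.isCompact_closure
  obtain ⟨R₀, hR₀⟩ := hDcl.exists_bound_of_continuousOn ((auxSc d).continuous.continuousOn)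
  set R := max R₀ 0 with hRdef
  have hR : 0 ≤ R := le_max_right _ _
  have hRb : ∀ x ∈ closure D, |auxSc d x| ≤ R := by
    intro x hx
    have := hR₀ x hx
    rw [Real.norm_eq_abs] at this
    exact this.trans (le_max_left _ _)
  set K := (Hb + C^2 + C + c + 1) / c with hKdef
  have hK : c * K = Hb + C^2 + C + c + 1 := by
    rw [hKdef]; field_simp
  have hKpos : 0 < K := by nlinarith [hK]
  refine ⟨((2/c) * T⁻¹ + K) * (1 + 2*R), ?_, ?_⟩
  · have h1 : 0 < (2/c) * T⁻¹ := by positivity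
    have h2 : 0 < 1 + 2*R := by linarith
    exact mul_pos (by linarith) h2
  · intro ν hν A hA hA0 hsgn h u hhcont hhb hu hpde hbc x hx
    have h1 := aux_key hDo hDcl hR hRb hc hC hHb hT hν hK hA hsgn hhb hu hpde hbc
      (Or.inl rfl : (1:ℝ) = 1 ∨ (1:ℝ) = -1) x hx
    have h2 := aux_key hDo hDcl hR hRb hc hC hHb hT hν hK hA hsgn hhb hu hpde hbc
      (Or.inr rfl : (-1:ℝ) = 1 ∨ (-1:ℝ) = -1) x hx
    rw [abs_le]
    constructor
    · linarith [h2]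
    · linarith [h1]

end
end

section
/- Let D⊂ℝ^d be a bounded domain, T>0, ν>0, and let A∈C²(ℝ,ℝ^d) satisfy (Σ_{j=1}^d A_j'(u))·sgn(u) ≥ c|u| − C for all u∈ℝ with c,C>0. Let h be bounded on Q_T=[0,T]×D, let L ≥ 0, α⁻ = min{x_j : x∈D̄, 1≤j≤d}, and for ε∈(0,1] set B_ε = max{2c⁻¹, 2C(T+ε), C⁻¹(T+ε)‖h‖_{L^∞}} and u_ε⁺(t,x) = [B_ε(B_ε + Σ_{j=1}^d x_j − dα⁻) + Lε]/(t+ε). Then u_ε⁺ > 0 on Q̄_T, u_ε⁺(0,x) ≥ L for all x∈D̄, and F(u_ε⁺)(t,x) := ∂_t u_ε⁺ + Σ_j ∂_{x_j}(A_j(u_ε⁺)) − νΔu_ε⁺ ≥ ‖h‖_{L^∞} for all (t,x)∈Q_T. -/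
open Set MeasureTheory Filter Topology

noncomputable section

set_option maxHeartbeats 1000000 in
/-- the explicit barrier `u_ε⁺` from the proof of Proposition 1.4 is positive,
dominates `L` at `t = 0`, and is a supersolution: `F(u_ε⁺) ≥ ‖h‖_{L^∞}` on `Q_T`. -/
theorem stmt_4 {d : ℕ} (D : Set (Euc d)) (hD : Bornology.IsBounded D)
    (T ν c C L : ℝ) (hT : 0 < T) (hν : 0 < ν) (hc : 0 < c) (hC : 0 < C) (hL : 0 ≤ L)
    (A : ℝ → Fin d → ℝ) (hA : ContDiff ℝ 2 A) (hsgn : SignCondition A c C)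
    (h : ℝ → Euc d → ℝ) (hbd : ∃ N, ∀ t ∈ Icc (0:ℝ) T, ∀ x ∈ D, |h t x| ≤ N)
    (ε : ℝ) (hε : ε ∈ Ioc (0:ℝ) 1)
    (Hsup : ℝ) (hHsup : Hsup = sSup ((fun p : ℝ × Euc d => |h p.1 p.2|) '' (Icc 0 T ×ˢ D)))
    (αm : ℝ) (hαm : αm = sInf {r : ℝ | ∃ x ∈ closure D, ∃ j : Fin d, r = x j})
    (Bε : ℝ) (hBε : Bε = max (max (2 / c) (2 * C * (T + ε))) (C⁻¹ * (T + ε) * Hsup))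
    (uplus : ℝ → Euc d → ℝ)
    (huplus : uplus = fun t x => (Bε * (Bε + (∑ j : Fin d, x j) - d * αm) + L * ε) / (t + ε)) :
    (∀ t ∈ Icc (0:ℝ) T, ∀ x ∈ closure D, 0 < uplus t x) ∧
    (∀ x ∈ closure D, L ≤ uplus 0 x) ∧
    (∀ t ∈ Icc (0:ℝ) T, ∀ x ∈ D,
      Hsup ≤ dtt uplus t x + divA A (uplus t) x - ν * lapl (uplus t) x) := by
  obtain ⟨hε0, hε1⟩ := hε
  have hBpos : 0 < Bε := by
    have h2c : (0:ℝ) < 2 / c := by positivity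
    have hle : 2 / c ≤ Bε := by rw [hBε]; exact le_max_of_le_left (le_max_left _ _)
    linarith
  have hcB : 2 ≤ c * Bε := by
    have hle : 2 / c ≤ Bε := by rw [hBε]; exact le_max_of_le_left (le_max_left _ _)
    rw [div_le_iff₀ hc] at hle
    nlinarith
  have hB2 : 2 * C * (T + ε) ≤ Bε := by
    rw [hBε]; exact le_max_of_le_left (le_max_right _ _)
  have hB3 : C⁻¹ * (T + ε) * Hsup ≤ Bε := by rw [hBε]; exact le_max_right _ _
  have hcoord : ∀ x ∈ closure D, ∀ j : Fin d, αm ≤ x j := by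
    intro x hx j
    have hbdd : BddBelow {r : ℝ | ∃ x ∈ closure D, ∃ j : Fin d, r = x j} := by
      obtain ⟨M, hM⟩ := (Metric.isBounded_iff_subset_closedBall 0).mp hD.closure
      refine ⟨-M, ?_⟩
      rintro r ⟨y, hy, j', rfl⟩
      have h1 : ‖y‖ ≤ M := by simpa using hM hy
      have h2 : |y j'| ≤ ‖y‖ := by
        have h3 := abs_real_inner_le_norm (EuclideanSpace.single j' (1:ℝ)) y
        simpa [EuclideanSpace.inner_single_left, EuclideanSpace.norm_single] using h3
      have h4 := abs_le.mp (h2.trans h1)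
      linarith [h4.1]
    rw [hαm]
    exact csInf_le hbdd ⟨x, hx, j, rfl⟩
  have hsum : ∀ x ∈ closure D, (d : ℝ) * αm ≤ ∑ j : Fin d, x j := by
    intro x hx
    calc (d : ℝ) * αm = ∑ _j : Fin d, αm := by
          simp [Finset.sum_const, nsmul_eq_mul]
      _ ≤ ∑ j : Fin d, x j := Finset.sum_le_sum fun j _ => hcoord x hx j
  have hK : ∀ x ∈ closure D,
      Bε ^ 2 + L * ε ≤ Bε * (Bε + (∑ j : Fin d, x j) - d * αm) + L * ε := by
    intro x hx
    have h1 : Bε ≤ Bε + (∑ j : Fin d, x j) - d * αm := by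
      have := hsum x hx; linarith
    nlinarith [mul_le_mul_of_nonneg_left h1 hBpos.le]
  have hKpos : ∀ x ∈ closure D,
      0 < Bε * (Bε + (∑ j : Fin d, x j) - d * αm) + L * ε := by
    intro x hx
    have h1 := hK x hx
    nlinarith [mul_nonneg hL hε0.le]
  have hpos : ∀ t ∈ Icc (0:ℝ) T, ∀ x ∈ closure D, 0 < uplus t x := by
    intro t ht x hx
    rw [huplus]
    exact div_pos (hKpos x hx) (by linarith [ht.1])
  refine ⟨hpos, ?_, ?_⟩
  · intro x hx
    rw [huplus]
    simp only
    rw [le_div_iff₀ (by linarith : (0:ℝ) < 0 + ε)]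
    have h1 := hK x hx
    nlinarith [sq_nonneg Bε]
  · intro t ht x hx
    have hxc : x ∈ closure D := subset_closure hx
    have hτ : (0:ℝ) < t + ε := by linarith [ht.1]
    have hτne : t + ε ≠ 0 := ne_of_gt hτ
    have hτT : t + ε ≤ T + ε := by linarith [ht.2]
    have hKdef : ∃ K : ℝ, K = Bε * (Bε + (∑ j : Fin d, x j) - d * αm) + L * ε := ⟨_, rfl⟩
    obtain ⟨K, hKdef⟩ := hKdef
    have hKx : Bε ^ 2 + L * ε ≤ K := hKdef ▸ hK x hxc
    have hKp : 0 < K := hKdef ▸ hKpos x hxc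
    have hHsup0 : 0 ≤ Hsup := by
      rw [hHsup]
      obtain ⟨N, hN⟩ := hbd
      have hmem : |h 0 x| ∈ (fun p : ℝ × Euc d => |h p.1 p.2|) '' (Icc 0 T ×ˢ D) :=
        ⟨(0, x), ⟨⟨le_refl 0, hT.le⟩, hx⟩, rfl⟩
      have hbdd : BddAbove ((fun p : ℝ × Euc d => |h p.1 p.2|) '' (Icc 0 T ×ˢ D)) := by
        refine ⟨N, ?_⟩
        rintro r ⟨⟨s, y⟩, ⟨hs, hy⟩, rfl⟩
        exact hN s hs y hy
      exact le_trans (abs_nonneg _) (le_csSup hbdd hmem)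
    -- the linear functional ℓ y = ∑ j, y j
    set ℓ : Euc d →L[ℝ] ℝ := ∑ j : Fin d, PiLp.proj 2 (fun _ : Fin d => ℝ) j with hℓdef
    have hℓ : ∀ y : Euc d, ℓ y = ∑ j : Fin d, y j := by
      intro y; simp [hℓdef, ContinuousLinearMap.sum_apply]
    have hℓe : ∀ j : Fin d, ℓ (ebasis d j) = 1 := by
      intro j
      rw [hℓ]
      simp [ebasis, EuclideanSpace.single_apply]
    -- spatial derivative
    have hfd : ∀ y : Euc d, HasFDerivAt (uplus t) ((Bε / (t + ε)) • ℓ) y := by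
      intro y
      have heq : uplus t = fun z : Euc d =>
          ((Bε / (t + ε)) • ℓ) z + (Bε * (Bε - d * αm) + L * ε) / (t + ε) := by
        funext z
        simp only [huplus, ContinuousLinearMap.smul_apply, smul_eq_mul, hℓ]
        field_simp
        ring
      rw [heq]
      exact ((Bε / (t + ε)) • ℓ).hasFDerivAt.add_const _
    have hfderiv : ∀ y : Euc d, fderiv ℝ (uplus t) y = (Bε / (t + ε)) • ℓ :=
      fun y => (hfd y).fderiv
    -- Laplacian vanishes
    have hlapl : lapl (uplus t) x = 0 := by
      have hconst : (fun y : Euc d => fderiv ℝ (uplus t) y)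
          = fun _ : Euc d => (Bε / (t + ε)) • ℓ := funext hfderiv
      simp [lapl, dx2, hconst]
    -- time derivative
    have hdtt : dtt uplus t x = K * (-1 / (t + ε) ^ 2) := by
      have huf : (fun s => uplus s x) = fun s : ℝ => K * (s + ε)⁻¹ := by
        funext s
        simp only [huplus, hKdef, div_eq_mul_inv]
      rw [dtt, huf]
      have hb := ((hasDerivAt_id t).add_const ε).inv (by simpa using hτne)
      have hmul := hb.const_mul K
      have hd : HasDerivAt (fun s : ℝ => K * (s + ε)⁻¹) (K * (-1 / (t + ε) ^ 2)) t := by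
        simpa using hmul
      exact hd.deriv
    -- divergence term
    have hdivA : divA A (uplus t) x
        = (∑ j : Fin d, deriv (fun v => A v j) (uplus t x)) * (Bε / (t + ε)) := by
      rw [divA, Finset.sum_mul]
      refine Finset.sum_congr rfl fun j _ => ?_
      have hAj : ContDiff ℝ 2 fun v => A v j := contDiff_pi.mp hA j
      have hAd : HasDerivAt (fun v => A v j) (deriv (fun v => A v j) (uplus t x)) (uplus t x) :=
        ((hAj.differentiable (by norm_num)) (uplus t x)).hasDerivAt
      have hcomp : HasFDerivAt (fun y : Euc d => A (uplus t y) j)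
          ((deriv (fun v => A v j) (uplus t x)) • ((Bε / (t + ε)) • ℓ)) x :=
        hAd.comp_hasFDerivAt x (hfd x)
      rw [hcomp.fderiv]
      simp [hℓe j]
    -- sign condition
    have hup : uplus t x = K / (t + ε) := by
      simp only [huplus, hKdef]
    have hS : c * (K / (t + ε)) - C ≤ ∑ j : Fin d, deriv (fun v => A v j) (uplus t x) := by
      have hpos' : 0 < uplus t x := hpos t ht x hxc
      have hsg := hsgn (uplus t x)
      rw [Real.sign_of_pos hpos', abs_of_pos hpos', mul_one] at hsg
      calc c * (K / (t + ε)) - C = c * uplus t x - C := by rw [hup]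
        _ ≤ _ := hsg
    -- arithmetic
    rw [hdtt, hdivA, hlapl]
    have hBτ : (0:ℝ) < Bε / (t + ε) := div_pos hBpos hτ
    have hmul2 : (c * (K / (t + ε)) - C) * (Bε / (t + ε))
        ≤ (∑ j : Fin d, deriv (fun v => A v j) (uplus t x)) * (Bε / (t + ε)) :=
      mul_le_mul_of_nonneg_right hS hBτ.le
    have hmain : Hsup ≤ K * (-1 / (t + ε) ^ 2) + (c * (K / (t + ε)) - C) * (Bε / (t + ε)) := by
      have hrhs : K * (-1 / (t + ε) ^ 2) + (c * (K / (t + ε)) - C) * (Bε / (t + ε))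
          = (c * K * Bε - K - C * Bε * (t + ε)) / (t + ε) ^ 2 := by
        field_simp
        ring
      rw [hrhs, le_div_iff₀ (by positivity)]
      have hB2' : 2 * C * (t + ε) ≤ Bε := by nlinarith
      have hB3' : (t + ε) * Hsup ≤ C * Bε := by
        have h5 := mul_le_mul_of_nonneg_left hB3 hC.le
        rw [← mul_assoc, ← mul_assoc, mul_inv_cancel₀ (ne_of_gt hC), one_mul] at h5
        nlinarith
      nlinarith [mul_nonneg hKp.le (by linarith : (0:ℝ) ≤ c * Bε - 2),
        mul_le_mul_of_nonneg_left hB2' hBpos.le,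
        mul_le_mul_of_nonneg_left hB3' hτ.le,
        mul_nonneg hL hε0.le]
    linarith


end
end
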